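/- Define W(E) = (2/ℓ + (2πβ)^{-1/2})^d · (2πC)^{-1/2} · b⁻¹ · exp(βE + β²C_ℓ/2) with constants ℓ, β, C, b, C_ℓ > 0 and choosing β = (2C_ℓ)⁻¹(√(E² + 2dC_ℓ) − E) with ℓ fixed. Then as E → −∞, (ln W(E))/E² → −1/(2C_ℓ). -/

import Mathlib

open Filter
open scoped Real

/-- low-energy asymptotics of the Wegner bound
`W(E) = (2/ℓ + (2πβ)^{-1/2})^d (2πC)^{-1/2} b⁻¹ exp(βE + β²C_ℓ/2)` with the
variational choice `β(E) = (2C_ℓ)⁻¹(√(E² + 2dC_ℓ) − E)`: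
`(ln W(E))/E² → −1/(2C_ℓ)` as `E → −∞`. -/
theorem wegner_bound_low_energy_asymptotics
    (d : ℕ) (ℓ C b Cl : ℝ) (hℓ : 0 < ℓ) (hC : 0 < C) (hb : 0 < b) (hCl : 0 < Cl) :
    Tendsto (fun E : ℝ =>
        Real.log
          ((2 / ℓ + (Real.sqrt (2 * π *
              ((2 * Cl)⁻¹ * (Real.sqrt (E ^ 2 + 2 * d * Cl) - E))))⁻¹) ^ d *
            (Real.sqrt (2 * π * C))⁻¹ * b⁻¹ *
            Real.exp ((2 * Cl)⁻¹ * (Real.sqrt (E ^ 2 + 2 * d * Cl) - E) * E +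
              ((2 * Cl)⁻¹ * (Real.sqrt (E ^ 2 + 2 * d * Cl) - E)) ^ 2 * Cl / 2))
          / E ^ 2)
      atBot (nhds (-(1 / (2 * Cl)))) := by
  have hCl' : (Cl : ℝ) ≠ 0 := hCl.ne'
  -- E^2 → atTop
  have hE2 : Tendsto (fun E : ℝ => E ^ 2) atBot atTop := by
    have h1 : Tendsto (fun E : ℝ => (-E) ^ 2) atBot atTop :=
      (tendsto_pow_atTop two_ne_zero).comp tendsto_neg_atBot_atTop
    refine h1.congr fun E => by ring
  have hinv : Tendsto (fun E : ℝ => (E ^ 2)⁻¹) atBot (nhds 0) :=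
    tendsto_inv_atTop_zero.comp hE2
  -- t(E) := sqrt (1 + 2 d Cl / E^2) → 1
  have ht : Tendsto (fun E : ℝ => Real.sqrt (1 + 2 * d * Cl / E ^ 2)) atBot (nhds 1) := by
    have h1 : Tendsto (fun E : ℝ => 1 + 2 * d * Cl / E ^ 2) atBot (nhds 1) := by
      have := (hinv.const_mul (2 * d * Cl)).const_add 1
      simpa [div_eq_mul_inv] using this
    have h2 := (Real.continuous_sqrt.tendsto 1).comp h1
    simpa [Real.sqrt_one, Function.comp_def] using h2
  -- β → atTop
  have hβ : Tendsto (fun E : ℝ =>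
      (2 * Cl)⁻¹ * (Real.sqrt (E ^ 2 + 2 * d * Cl) - E)) atBot atTop := by
    have hlow : Tendsto (fun E : ℝ => -E / Cl) atBot atTop :=
      (tendsto_neg_atBot_atTop).atTop_div_const hCl
    refine tendsto_atTop_mono' _ ?_ hlow
    filter_upwards [eventually_le_atBot (0 : ℝ)] with E hE
    have hs : -E ≤ Real.sqrt (E ^ 2 + 2 * d * Cl) := by
      have h1 : Real.sqrt (E ^ 2) ≤ Real.sqrt (E ^ 2 + 2 * d * Cl) := by
        apply Real.sqrt_le_sqrt; nlinarith [mul_nonneg (mul_nonneg (by norm_num : (0:ℝ) ≤ 2) (Nat.cast_nonneg d : (0:ℝ) ≤ d)) hCl.le]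
      have h2 : Real.sqrt (E ^ 2) = -E := by
        rw [Real.sqrt_sq_eq_abs, abs_of_nonpos hE]
      linarith
    have heq : -E / Cl = (2 * Cl)⁻¹ * (-E - E) := by field_simp; ring
    rw [heq]
    exact mul_le_mul_of_nonneg_left (by linarith) (by positivity)
  -- first log factor → log (2/ℓ)
  have hlog1 : Tendsto (fun E : ℝ =>
      Real.log (2 / ℓ + (Real.sqrt (2 * π *
        ((2 * Cl)⁻¹ * (Real.sqrt (E ^ 2 + 2 * d * Cl) - E))))⁻¹)) atBot
      (nhds (Real.log (2 / ℓ))) := by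
    have h2πβ : Tendsto (fun E : ℝ => 2 * π *
        ((2 * Cl)⁻¹ * (Real.sqrt (E ^ 2 + 2 * d * Cl) - E))) atBot atTop :=
      hβ.const_mul_atTop (by positivity)
    have hsqrtTop : Tendsto Real.sqrt atTop atTop := by
      refine tendsto_atTop_atTop.mpr fun c => ⟨c ^ 2, fun a ha => ?_⟩
      calc c ≤ |c| := le_abs_self c
        _ = Real.sqrt (c ^ 2) := (Real.sqrt_sq_eq_abs c).symm
        _ ≤ Real.sqrt a := Real.sqrt_le_sqrt ha
    have hsq := hsqrtTop.comp h2πβ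
    have hinv0 := tendsto_inv_atTop_zero.comp hsq
    have harg : Tendsto (fun E : ℝ => 2 / ℓ + (Real.sqrt (2 * π *
        ((2 * Cl)⁻¹ * (Real.sqrt (E ^ 2 + 2 * d * Cl) - E))))⁻¹) atBot
        (nhds (2 / ℓ)) := by
      have := hinv0.const_add (2 / ℓ)
      simpa using this
    have hcont : ContinuousAt Real.log (2 / ℓ) :=
      Real.continuousAt_log (by positivity)
    exact hcont.tendsto.comp harg
  -- the model function
  set L : ℝ := (d : ℝ) * Real.log (2 / ℓ) + Real.log ((Real.sqrt (2 * π * C))⁻¹) +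
      Real.log b⁻¹ with hL
  have key : Tendsto (fun E : ℝ =>
      ((d : ℝ) * Real.log (2 / ℓ + (Real.sqrt (2 * π *
          ((2 * Cl)⁻¹ * (Real.sqrt (E ^ 2 + 2 * d * Cl) - E))))⁻¹) +
        Real.log ((Real.sqrt (2 * π * C))⁻¹) + Real.log b⁻¹) * (E ^ 2)⁻¹ +
      (-((Real.sqrt (1 + 2 * d * Cl / E ^ 2) + 1) *
          (3 - Real.sqrt (1 + 2 * d * Cl / E ^ 2))) / (8 * Cl))) atBot
      (nhds (-(1 / (2 * Cl)))) := by
    have hA : Tendsto (fun E : ℝ =>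
        ((d : ℝ) * Real.log (2 / ℓ + (Real.sqrt (2 * π *
            ((2 * Cl)⁻¹ * (Real.sqrt (E ^ 2 + 2 * d * Cl) - E))))⁻¹) +
          Real.log ((Real.sqrt (2 * π * C))⁻¹) + Real.log b⁻¹) * (E ^ 2)⁻¹) atBot
        (nhds 0) := by
      have h1 := ((hlog1.const_mul (d : ℝ)).add_const
        (Real.log ((Real.sqrt (2 * π * C))⁻¹))).add_const (Real.log b⁻¹)
      have := h1.mul hinv
      simpa using this
    have hB : Tendsto (fun E : ℝ =>
        -((Real.sqrt (1 + 2 * d * Cl / E ^ 2) + 1) *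
            (3 - Real.sqrt (1 + 2 * d * Cl / E ^ 2))) / (8 * Cl)) atBot
        (nhds (-((1 + 1) * (3 - 1)) / (8 * Cl))) := by
      exact (((ht.add_const 1).mul ((ht.const_sub 3))).neg).div_const (8 * Cl)
    have := hA.add hB
    have heq : (0 : ℝ) + -((1 + 1) * (3 - 1)) / (8 * Cl) = -(1 / (2 * Cl)) := by
      field_simp; ring
    rwa [heq] at this
  refine key.congr' ?_
  filter_upwards [eventually_lt_atBot (0 : ℝ)] with E hE
  have hE0 : E ≠ 0 := hE.ne
  have hE2pos : (0 : ℝ) < E ^ 2 := by positivity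
  set t := Real.sqrt (1 + 2 * d * Cl / E ^ 2) with htdef
  set s := Real.sqrt (E ^ 2 + 2 * d * Cl) with hsdef
  have hst : s = -E * t := by
    have harg : E ^ 2 + 2 * d * Cl = E ^ 2 * (1 + 2 * d * Cl / E ^ 2) := by
      field_simp
    rw [hsdef, harg, Real.sqrt_mul (sq_nonneg E), Real.sqrt_sq_eq_abs,
      abs_of_neg hE]
  have hsge : -E ≤ s := by
    have h1 : Real.sqrt (E ^ 2) ≤ s := by
      apply Real.sqrt_le_sqrt
      nlinarith [mul_nonneg (mul_nonneg (by norm_num : (0:ℝ) ≤ 2) (Nat.cast_nonneg d : (0:ℝ) ≤ d)) hCl.le]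
    rwa [Real.sqrt_sq_eq_abs, abs_of_neg hE] at h1
  have hβpos : 0 < (2 * Cl)⁻¹ * (s - E) := by
    have : 0 < s - E := by linarith
    positivity
  have hxpos : 0 < 2 / ℓ + (Real.sqrt (2 * π * ((2 * Cl)⁻¹ * (s - E))))⁻¹ := by
    have : (0:ℝ) ≤ (Real.sqrt (2 * π * ((2 * Cl)⁻¹ * (s - E))))⁻¹ := by positivity
    have h2ℓ : (0:ℝ) < 2 / ℓ := by positivity
    linarith
  have hypos : (0:ℝ) < (Real.sqrt (2 * π * C))⁻¹ := by
    have : (0:ℝ) < Real.sqrt (2 * π * C) := Real.sqrt_pos.mpr (by positivity)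
    positivity
  -- expand the log
  have hlogexp : Real.log
      ((2 / ℓ + (Real.sqrt (2 * π * ((2 * Cl)⁻¹ * (s - E))))⁻¹) ^ d *
        (Real.sqrt (2 * π * C))⁻¹ * b⁻¹ *
        Real.exp ((2 * Cl)⁻¹ * (s - E) * E + ((2 * Cl)⁻¹ * (s - E)) ^ 2 * Cl / 2)) =
      (d : ℝ) * Real.log (2 / ℓ + (Real.sqrt (2 * π * ((2 * Cl)⁻¹ * (s - E))))⁻¹) +
        Real.log ((Real.sqrt (2 * π * C))⁻¹) + Real.log b⁻¹ +
        ((2 * Cl)⁻¹ * (s - E) * E + ((2 * Cl)⁻¹ * (s - E)) ^ 2 * Cl / 2) := by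
    rw [Real.log_mul (by positivity) (Real.exp_ne_zero _),
      Real.log_mul (by positivity) (by positivity),
      Real.log_mul (by positivity) (by positivity),
      Real.log_pow, Real.log_exp]
  have hquad : ((2 * Cl)⁻¹ * (s - E) * E + ((2 * Cl)⁻¹ * (s - E)) ^ 2 * Cl / 2) / E ^ 2 =
      -((t + 1) * (3 - t)) / (8 * Cl) := by
    rw [hst]
    field_simp
    ring
  rw [hlogexp, add_div, hquad, mul_comm _ ((E ^ 2)⁻¹), ← div_eq_inv_mul]
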